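/- Let (Y, π, ≤) be a compact ordered space and A a set. Let θ be a map assigning to each compact saturated subset of Y^↑ an equivalence relation on A, and suppose: (a) for every family (K_i)_{i∈I} of compact saturated subsets of Y^↑, θ(⋂_{i∈I} K_i) = ⨆_{i∈I} θ(K_i), the supremum taken in the complete lattice of equivalence relations on A (for I = ∅ this says θ(Y) is the identity relation; note that arbitrary intersections of compact saturated subsets of Y^↑ are again compact saturated); (b) θ(K ∪ L) = θ(K) ∩ θ(L) for all compact saturated K, L, and θ(∅) = A × A. Then: (1) for every compact saturated K of Y^↑, θ(K) = ⋃ {θ(K') : K' compact saturated in Y^↑ with K ≺ K'}; (2) for every compact saturated K of Y^↑ and all a, b ∈ A: (a, b) ∈ θ(K) if and only if (a, b) ∈ θ(↑y) for every y ∈ K, where ↑y = {x ∈ Y : y ≤ x} (a compact saturated subset of Y^↑). -/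

import Mathlib

/-- The *upper topology* `π^↑` associated to a topology and a preorder:
its open sets are exactly the open upper sets. -/
def upTop (Y : Type*) [TopologicalSpace Y] [Preorder Y] : TopologicalSpace Y where
  IsOpen U := IsOpen U ∧ IsUpperSet U
  isOpen_univ := ⟨isOpen_univ, isUpperSet_univ⟩
  isOpen_inter := fun _ _ hU hV => ⟨hU.1.inter hV.1, hU.2.inter hV.2⟩
  isOpen_sUnion := fun _ hS =>
    ⟨isOpen_sUnion fun U hU => (hS U hU).1, isUpperSet_sUnion fun U hU => (hS U hU).2⟩

/-- `K` is compact and saturated with respect to the upper topology `π^↑`. -/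
def CompSatUp {Y : Type*} [TopologicalSpace Y] [Preorder Y] (K : Set Y) : Prop :=
  @IsCompact Y (upTop Y) K ∧
    ∃ 𝒰 : Set (Set Y), (∀ U ∈ 𝒰, IsOpen U ∧ IsUpperSet U) ∧ K = ⋂₀ 𝒰

/-- `K ≺ K'` for compact saturated subsets of `Y^↑`: there is a `π^↑`-open set
(i.e. a `π`-open upper set) `U` with `K ⊆ U ⊆ K'`. -/
def WayBelow {Y : Type*} [TopologicalSpace Y] [Preorder Y] (K K' : Set Y) : Prop :=
  ∃ U : Set Y, IsOpen U ∧ IsUpperSet U ∧ K ⊆ U ∧ U ⊆ K'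

set_option linter.unusedSectionVars false

section Aux
variable {Y : Type*} [TopologicalSpace Y] [CompactSpace Y] [T2Space Y]
  [PartialOrder Y] [OrderClosedTopology Y]

lemma aux_isClosed_lowerClo {C : Set Y} (hC : IsClosed C) :
    IsClosed {z | ∃ c ∈ C, z ≤ c} := by
  have h1 : IsClosed ({p : Y × Y | p.1 ≤ p.2} ∩ Set.univ ×ˢ C) :=
    isClosed_le_prod.inter (isClosed_univ.prod hC)
  have h2 : IsCompact ({p : Y × Y | p.1 ≤ p.2} ∩ Set.univ ×ˢ C) := h1.isCompact
  have h3 : IsCompact (Prod.fst '' ({p : Y × Y | p.1 ≤ p.2} ∩ Set.univ ×ˢ C)) :=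
    h2.image continuous_fst
  have : {z | ∃ c ∈ C, z ≤ c} = Prod.fst '' ({p : Y × Y | p.1 ≤ p.2} ∩ Set.univ ×ˢ C) := by
    ext z
    constructor
    · rintro ⟨c, hc, hzc⟩; exact ⟨(z, c), ⟨hzc, Set.mem_univ _, hc⟩, rfl⟩
    · rintro ⟨⟨a, b⟩, ⟨hab, -, hb⟩, rfl⟩; exact ⟨b, hb, hab⟩
  rw [this]
  exact h3.isClosed

lemma aux_isClosed_upperClo {C : Set Y} (hC : IsClosed C) :
    IsClosed {z | ∃ c ∈ C, c ≤ z} := by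
  have h1 : IsClosed ({p : Y × Y | p.1 ≤ p.2} ∩ C ×ˢ Set.univ) :=
    isClosed_le_prod.inter (hC.prod isClosed_univ)
  have h3 : IsCompact (Prod.snd '' ({p : Y × Y | p.1 ≤ p.2} ∩ C ×ˢ Set.univ)) :=
    h1.isCompact.image continuous_snd
  have : {z | ∃ c ∈ C, c ≤ z} = Prod.snd '' ({p : Y × Y | p.1 ≤ p.2} ∩ C ×ˢ Set.univ) := by
    ext z
    constructor
    · rintro ⟨c, hc, hzc⟩; exact ⟨(c, z), ⟨hzc, hc, Set.mem_univ _⟩, rfl⟩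
    · rintro ⟨⟨a, b⟩, ⟨hab, ha, -⟩, rfl⟩; exact ⟨a, ha, hab⟩
  rw [this]
  exact h3.isClosed

/-- Nachbin separation: if `¬ y ≤ x`, there are a disjoint open upper set containing `y`
and open lower set containing `x`. -/
lemma nachbin {x y : Y} (h : ¬ y ≤ x) :
    ∃ U V : Set Y, IsOpen U ∧ IsUpperSet U ∧ IsOpen V ∧ IsLowerSet V ∧
      y ∈ U ∧ x ∈ V ∧ ∀ z, z ∈ U → z ∉ V := by
  have hKy : IsCompact (Set.Ici y) := (isClosed_Ici).isCompact
  have hLx : IsCompact (Set.Iic x) := (isClosed_Iic).isCompact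
  have hn : IsOpen {p : Y × Y | p.1 ≤ p.2}ᶜ := isClosed_le_prod.isOpen_compl
  have hp : Set.Ici y ×ˢ Set.Iic x ⊆ {p : Y × Y | p.1 ≤ p.2}ᶜ := by
    rintro ⟨a, b⟩ ⟨ha, hb⟩ hab
    exact h (le_trans (le_trans ha hab) hb)
  obtain ⟨N, M, hNo, hMo, hyN, hxM, hNM⟩ := generalized_tube_lemma hKy hLx hn hp
  -- no n ∈ N is ≤ any m ∈ M
  have key : ∀ n ∈ N, ∀ m ∈ M, ¬ n ≤ m := fun n hn' m hm hle =>
    hNM (Set.mk_mem_prod hn' hm) hle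
  refine ⟨{z | ∃ c ∈ Nᶜ, z ≤ c}ᶜ, {z | ∃ c ∈ Mᶜ, c ≤ z}ᶜ, ?_, ?_, ?_, ?_, ?_, ?_, ?_⟩
  · exact (aux_isClosed_lowerClo hNo.isClosed_compl).isOpen_compl
  · intro u v huv hu hc
    exact hu (by rcases hc with ⟨c, hc, hvc⟩; exact ⟨c, hc, le_trans huv hvc⟩)
  · exact (aux_isClosed_upperClo hMo.isClosed_compl).isOpen_compl
  · intro u v hvu hu hc
    exact hu (by rcases hc with ⟨c, hc, hcv⟩; exact ⟨c, hc, le_trans hcv hvu⟩)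
  · rintro ⟨c, hc, hyc⟩; exact hc (hyN hyc)
  · rintro ⟨c, hc, hcx⟩; exact hc (hxM hcx)
  · intro z hzU hzV
    have hzN : z ∈ N := by by_contra hz; exact hzU ⟨z, hz, le_refl z⟩
    have hzM : z ∈ M := by by_contra hz; exact hzV ⟨z, hz, le_refl z⟩
    exact key z hzN z hzM (le_refl z)

end Aux

section Aux2
variable {Y : Type*} [TopologicalSpace Y] [CompactSpace Y] [T2Space Y]
  [PartialOrder Y] [OrderClosedTopology Y]

lemma compSatUp_iff {K : Set Y} : CompSatUp K ↔ IsClosed K ∧ IsUpperSet K := by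
  constructor
  · rintro ⟨hKc, 𝒰, h𝒰, rfl⟩
    have hup : IsUpperSet (⋂₀ 𝒰) := isUpperSet_sInter fun U hU => (h𝒰 U hU).2
    refine ⟨?_, hup⟩
    rw [← isOpen_compl_iff]
    rw [isOpen_iff_forall_mem_open]
    intro x hx
    -- for each y ∈ K, ¬ y ≤ x
    have hyx : ∀ y ∈ ⋂₀ 𝒰, ¬ y ≤ x := fun y hy hle => hx (hup hle hy)
    choose! W V hWo hWu hVo hVl hyW hxV hd using fun y (hy : y ∈ ⋂₀ 𝒰) => nachbin (hyx y hy)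
    -- cover K by the W y, upTop-open
    have hcov : ⋂₀ 𝒰 ⊆ ⋃ y : ⋂₀ 𝒰, W y := fun y hy =>
      Set.mem_iUnion.2 ⟨⟨y, hy⟩, hyW y hy⟩
    obtain ⟨t, ht⟩ := @IsCompact.elim_finite_subcover Y (upTop Y) _ _ hKc
      (fun y : ⋂₀ 𝒰 => W y) (fun y => ⟨hWo y y.2, hWu y y.2⟩) hcov
    refine ⟨⋂ y ∈ t, V y, ?_, ?_, ?_⟩
    · intro z hz hzK
      have := ht hzK
      simp only [Set.mem_iUnion] at this
      obtain ⟨y, hyt, hzW⟩ := this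
      exact hd y y.2 z hzW (Set.mem_iInter₂.1 hz y hyt)
    · exact isOpen_biInter_finset fun y _ => hVo y y.2
    · exact Set.mem_iInter₂.2 fun y _ => hxV y y.2
  · rintro ⟨hKc, hKu⟩
    constructor
    · -- compact in upTop since upTop is coarser
      rw [@isCompact_iff_finite_subcover]
      intro ι U hUo hKU
      exact hKc.isCompact.elim_finite_subcover U (fun i => (hUo i).1) hKU
    · refine ⟨{U | IsOpen U ∧ IsUpperSet U ∧ K ⊆ U}, fun U hU => ⟨hU.1, hU.2.1⟩, ?_⟩
      apply Set.Subset.antisymm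
      · exact fun y hy => Set.mem_sInter.2 fun U hU => hU.2.2 hy
      · intro x hx
        by_contra hxK
        have hyx : ∀ y ∈ K, ¬ y ≤ x := fun y hy hle => hxK (hKu hle hy)
        choose! W V hWo hWu hVo hVl hyW hxV hd using fun y (hy : y ∈ K) => nachbin (hyx y hy)
        have hcov : K ⊆ ⋃ y : K, W y := fun y hy => Set.mem_iUnion.2 ⟨⟨y, hy⟩, hyW y hy⟩
        obtain ⟨t, ht⟩ := hKc.isCompact.elim_finite_subcover
          (fun y : K => W y) (fun y => hWo y y.2) hcov
        have hUmem : (⋃ y ∈ t, W y) ∈ {U | IsOpen U ∧ IsUpperSet U ∧ K ⊆ U} := by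
          refine ⟨isOpen_biUnion fun y _ => hWo y y.2,
            isUpperSet_iUnion₂ fun y _ => hWu y y.2, ht⟩
        have := Set.mem_sInter.1 hx _ hUmem
        simp only [Set.mem_iUnion] at this
        obtain ⟨y, hyt, hxW⟩ := this
        exact hd y y.2 x hxW (hxV y y.2)

end Aux2

section Aux3
variable {Y : Type*} [TopologicalSpace Y] [CompactSpace Y] [T2Space Y]
  [PartialOrder Y] [OrderClosedTopology Y]

lemma interpolation {K U : Set Y} (hK : CompSatUp K) (hUo : IsOpen U) (hUu : IsUpperSet U)
    (hKU : K ⊆ U) : ∃ C : Set Y, CompSatUp C ∧ WayBelow K C ∧ C ⊆ U := by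
  -- for each y ∈ K, find an open upper W y and a closed upper C y with y ∈ W y ⊆ C y ⊆ U
  have step : ∀ y ∈ K, ∃ W C : Set Y, IsOpen W ∧ IsUpperSet W ∧ IsClosed C ∧ IsUpperSet C ∧
      y ∈ W ∧ W ⊆ C ∧ C ⊆ U := by
    intro y hy
    have hUc : IsCompact Uᶜ := hUo.isClosed_compl.isCompact
    have hyx : ∀ x ∈ Uᶜ, ¬ y ≤ x := fun x hx hle => hx (hUu hle (hKU hy))
    choose! W V hWo hWu hVo hVl hyW hxV hd using fun x (hx : x ∈ Uᶜ) => nachbin (hyx x hx)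
    have hcov : Uᶜ ⊆ ⋃ x : ↥Uᶜ, V x := fun x hx => Set.mem_iUnion.2 ⟨⟨x, hx⟩, hxV x hx⟩
    obtain ⟨t, ht⟩ := hUc.elim_finite_subcover (fun x : ↥Uᶜ => V x) (fun x => hVo x x.2) hcov
    refine ⟨⋂ x ∈ t, W x, (⋃ x ∈ t, V x)ᶜ, ?_, ?_, ?_, ?_, ?_, ?_, ?_⟩
    · exact isOpen_biInter_finset fun x _ => hWo x x.2
    · exact isUpperSet_iInter₂ fun (x : ↥Uᶜ) _ => hWu x x.2
    · exact (isOpen_biUnion fun (x : ↥Uᶜ) _ => hVo x x.2).isClosed_compl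
    · exact (isLowerSet_iUnion₂ fun (x : ↥Uᶜ) _ => hVl x x.2).compl
    · exact Set.mem_iInter₂.2 fun x _ => hyW x x.2
    · intro z hz hzV
      simp only [Set.mem_iUnion] at hzV
      obtain ⟨x, hxt, hzVx⟩ := hzV
      exact hd x x.2 z (Set.mem_iInter₂.1 hz x hxt) hzVx
    · intro z hz
      by_contra hzU
      exact hz (ht hzU)
  choose! W C hWo hWu hCc hCu hyW hWC hCU using step
  have hcov : K ⊆ ⋃ y : K, W y := fun y hy => Set.mem_iUnion.2 ⟨⟨y, hy⟩, hyW y hy⟩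
  obtain ⟨t, ht⟩ := @IsCompact.elim_finite_subcover Y (upTop Y) _ _ hK.1
    (fun y : K => W y) (fun y => ⟨hWo y y.2, hWu y y.2⟩) hcov
  refine ⟨⋃ y ∈ t, C y, ?_, ?_, ?_⟩
  · exact compSatUp_iff.2 ⟨t.finite_toSet.isClosed_biUnion fun y _ => hCc y y.2,
      isUpperSet_iUnion₂ fun y _ => hCu y y.2⟩
  · refine ⟨⋃ y ∈ t, W y, isOpen_biUnion fun y _ => hWo y y.2,
      isUpperSet_iUnion₂ fun y _ => hWu y y.2, ht, ?_⟩
    exact Set.iUnion₂_mono fun y _ => hWC y y.2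
  · exact Set.iUnion₂_subset fun y _ => hCU y y.2

lemma compSatUp_biUnion {ι : Type*} (t : Finset ι) (f : ι → Set Y)
    (hf : ∀ i ∈ t, CompSatUp (f i)) : CompSatUp (⋃ i ∈ t, f i) :=
  compSatUp_iff.2 ⟨t.finite_toSet.isClosed_biUnion fun i hi => (compSatUp_iff.1 (hf i hi)).1,
    isUpperSet_iUnion₂ fun i hi => (compSatUp_iff.1 (hf i hi)).2⟩

lemma compSatUp_inter {K L : Set Y} (hK : CompSatUp K) (hL : CompSatUp L) :
    CompSatUp (K ∩ L) := by
  rw [compSatUp_iff] at *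
  exact ⟨hK.1.inter hL.1, hK.2.inter hL.2⟩

lemma compSatUp_univ : CompSatUp (Set.univ : Set Y) :=
  compSatUp_iff.2 ⟨isClosed_univ, isUpperSet_univ⟩

end Aux3

section Setoids

/-- For a nonempty directed family of setoids, the supremum relates `a` and `b`
iff some member does. -/
lemma sSup_directed_rel {A : Type*} {S : Set (Setoid A)} (hne : S.Nonempty)
    (hdir : ∀ r ∈ S, ∀ s ∈ S, ∃ t ∈ S, r ≤ t ∧ s ≤ t) (a b : A) :
    (sSup S).r a b ↔ ∃ r ∈ S, r.r a b := by
  constructor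
  · intro h
    rw [Setoid.sSup_eq_eqvGen] at h
    have h' : Relation.EqvGen (fun x y => ∃ r : Setoid A, r ∈ S ∧ r x y) a b := h
    clear h
    induction h' with
    | rel x y hxy => exact ⟨hxy.choose, hxy.choose_spec.1, hxy.choose_spec.2⟩
    | refl x => exact ⟨hne.choose, hne.choose_spec, hne.choose.refl x⟩
    | symm x y _ ih =>
      obtain ⟨r, hr, hxy⟩ := ih
      exact ⟨r, hr, r.symm hxy⟩
    | trans x y z _ _ ih₁ ih₂ =>
      obtain ⟨r, hr, hxy⟩ := ih₁
      obtain ⟨s, hs, hyz⟩ := ih₂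
      obtain ⟨t, htS, hrt, hst⟩ := hdir r hr s hs
      exact ⟨t, htS, t.trans (Setoid.le_def.1 hrt hxy) (Setoid.le_def.1 hst hyz)⟩
  · rintro ⟨r, hr, hab⟩
    exact Setoid.le_def.1 (le_sSup hr) hab

end Setoids

section Main
variable {Y : Type*} [TopologicalSpace Y] [CompactSpace Y] [T2Space Y]
  [PartialOrder Y] [OrderClosedTopology Y]
  {A : Type*} (θ : Set Y → Setoid A)

lemma theta_mono (hb : ∀ K L : Set Y, CompSatUp K → CompSatUp L → θ (K ∪ L) = θ K ⊓ θ L)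
    {K L : Set Y} (hK : CompSatUp K) (hL : CompSatUp L) (h : K ⊆ L) : θ L ≤ θ K := by
  have h1 : K ∪ L = L := Set.union_eq_self_of_subset_left h
  have h2 : θ L = θ K ⊓ θ L := by rw [← hb K L hK hL, h1]
  rw [h2]
  exact inf_le_left

lemma theta_part1
    (ha : ∀ 𝒦 : Set (Set Y), (∀ K ∈ 𝒦, CompSatUp K) → θ (⋂₀ 𝒦) = ⨆ K ∈ 𝒦, θ K)
    (hb : ∀ K L : Set Y, CompSatUp K → CompSatUp L → θ (K ∪ L) = θ K ⊓ θ L)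
    {K : Set Y} (hK : CompSatUp K) (a b : A) :
    (θ K).r a b ↔ ∃ K' : Set Y, CompSatUp K' ∧ WayBelow K K' ∧ (θ K').r a b := by
  set 𝒦 : Set (Set Y) := {K' | CompSatUp K' ∧ WayBelow K K'} with h𝒦
  have hKint : ⋂₀ 𝒦 = K := by
    apply Set.Subset.antisymm
    · intro x hx
      by_contra hxK
      obtain ⟨𝒰, h𝒰, hKeq⟩ := hK.2
      rw [hKeq] at hxK
      have hex : ∃ U ∈ 𝒰, x ∉ U := by
        by_contra hc
        push_neg at hc
        exact hxK (Set.mem_sInter.2 fun U hU => hc U hU)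
      obtain ⟨U, hU𝒰, hxU⟩ := hex
      have hKU : K ⊆ U := by rw [hKeq]; exact fun z hz => Set.mem_sInter.1 hz U hU𝒰
      obtain ⟨C, hC, hWB, hCU⟩ := interpolation hK (h𝒰 U hU𝒰).1 (h𝒰 U hU𝒰).2 hKU
      exact hxU (hCU (Set.mem_sInter.1 hx C ⟨hC, hWB⟩))
    · intro z hz
      refine Set.mem_sInter.2 fun K' hK' => ?_
      obtain ⟨U, _, _, hKU, hUK'⟩ := hK'.2
      exact hUK' (hKU hz)
  have heq : θ K = sSup (θ '' 𝒦) := by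
    rw [← hKint, ha 𝒦 (fun K' hK' => hK'.1), sSup_image]
  have huniv : Set.univ ∈ 𝒦 :=
    ⟨compSatUp_univ, Set.univ, isOpen_univ, isUpperSet_univ, Set.subset_univ K,
      subset_refl _⟩
  have hne : (θ '' 𝒦).Nonempty := ⟨θ Set.univ, Set.mem_image_of_mem θ huniv⟩
  have hdir : ∀ r ∈ θ '' 𝒦, ∀ s ∈ θ '' 𝒦, ∃ t ∈ θ '' 𝒦, r ≤ t ∧ s ≤ t := by
    rintro _ ⟨K₁, ⟨hc₁, U₁, hU₁o, hU₁u, hKU₁, hU₁K⟩, rfl⟩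
      _ ⟨K₂, ⟨hc₂, U₂, hU₂o, hU₂u, hKU₂, hU₂K⟩, rfl⟩
    have hmem : K₁ ∩ K₂ ∈ 𝒦 :=
      ⟨compSatUp_inter hc₁ hc₂, U₁ ∩ U₂, hU₁o.inter hU₂o, hU₁u.inter hU₂u,
        Set.subset_inter hKU₁ hKU₂, Set.inter_subset_inter hU₁K hU₂K⟩
    exact ⟨θ (K₁ ∩ K₂), Set.mem_image_of_mem θ hmem,
      theta_mono θ hb (compSatUp_inter hc₁ hc₂) hc₁ Set.inter_subset_left,
      theta_mono θ hb (compSatUp_inter hc₁ hc₂) hc₂ Set.inter_subset_right⟩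
  rw [heq, sSup_directed_rel hne hdir]
  constructor
  · rintro ⟨r, ⟨K', hK', rfl⟩, hab⟩
    exact ⟨K', hK'.1, hK'.2, hab⟩
  · rintro ⟨K', hc, hw, hab⟩
    exact ⟨θ K', Set.mem_image_of_mem θ ⟨hc, hw⟩, hab⟩

lemma theta_biUnion
    (hb : ∀ K L : Set Y, CompSatUp K → CompSatUp L → θ (K ∪ L) = θ K ⊓ θ L)
    (hempty : θ ∅ = ⊤) {ι : Type*} (t : Finset ι) (f : ι → Set Y)
    (hf : ∀ i ∈ t, CompSatUp (f i)) (a b : A) (h : ∀ i ∈ t, (θ (f i)).r a b) :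
    (θ (⋃ i ∈ t, f i)).r a b := by
  classical
  induction t using Finset.induction_on with
  | empty =>
    rw [show (⋃ i ∈ (∅ : Finset ι), f i) = ∅ by simp, hempty]
    trivial
  | @insert i s his ih =>
    rw [Finset.set_biUnion_insert,
      hb _ _ (hf i (Finset.mem_insert_self i s))
        (compSatUp_biUnion s f fun j hj => hf j (Finset.mem_insert_of_mem hj))]
    exact ⟨h i (Finset.mem_insert_self i s),
      ih (fun j hj => hf j (Finset.mem_insert_of_mem hj))
        (fun j hj => h j (Finset.mem_insert_of_mem hj))⟩

end Main

/-- Let `(Y, π, ≤)` be a compact ordered space and `θ` assign to subsets of `Y`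
equivalence relations on a set `A` such that
(a) for every family `𝒦` of compact saturated subsets of `Y^↑`,
    `θ (⋂ 𝒦) = ⨆ K ∈ 𝒦, θ K` in the complete lattice of equivalence relations
    (the case `𝒦 = ∅` saying `θ Y = ⊥`, the identity relation), and
(b) `θ (K ∪ L) = θ K ⊓ θ L` for compact saturated `K, L` and `θ ∅ = ⊤` (all of `A × A`).
Then for compact saturated `K` in `Y^↑`:
(1) `θ K` is the union of the `θ K'` over compact saturated `K'` with `K ≺ K'`;
(2) `(a, b) ∈ θ K` iff `(a, b) ∈ θ (↑y)` for every `y ∈ K`. -/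
theorem stmt8 {Y : Type*} [TopologicalSpace Y] [CompactSpace Y] [T2Space Y]
    [PartialOrder Y] [OrderClosedTopology Y]
    {A : Type*} (θ : Set Y → Setoid A)
    (ha : ∀ 𝒦 : Set (Set Y), (∀ K ∈ 𝒦, CompSatUp K) → θ (⋂₀ 𝒦) = ⨆ K ∈ 𝒦, θ K)
    (hb : ∀ K L : Set Y, CompSatUp K → CompSatUp L → θ (K ∪ L) = θ K ⊓ θ L)
    (hempty : θ ∅ = ⊤) :
    (∀ K : Set Y, CompSatUp K → ∀ a b : A,
        (θ K).r a b ↔ ∃ K' : Set Y, CompSatUp K' ∧ WayBelow K K' ∧ (θ K').r a b) ∧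
    (∀ K : Set Y, CompSatUp K → ∀ a b : A,
        (θ K).r a b ↔ ∀ y ∈ K, (θ (Set.Ici y)).r a b) := by
  refine ⟨fun K hK a b => theta_part1 θ ha hb hK a b, fun K hK a b => ?_⟩
  have hIci : ∀ y : Y, CompSatUp (Set.Ici y) := fun y =>
    compSatUp_iff.2 ⟨isClosed_Ici, isUpperSet_Ici y⟩
  constructor
  · intro h y hy
    have hsub : Set.Ici y ⊆ K := fun z hz => (compSatUp_iff.1 hK).2 hz hy
    exact Setoid.le_def.1 (theta_mono θ hb (hIci y) hK hsub) h
  · intro h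
    -- for each y ∈ K, get K' with Ici y ≺ K' and (θ K').r a b
    have step : ∀ y ∈ K, ∃ K' U : Set Y, CompSatUp K' ∧ IsOpen U ∧ IsUpperSet U ∧
        y ∈ U ∧ U ⊆ K' ∧ (θ K').r a b := by
      intro y hy
      obtain ⟨K', hK', ⟨U, hUo, hUu, hIU, hUK'⟩, hab⟩ :=
        (theta_part1 θ ha hb (hIci y) a b).1 (h y hy)
      exact ⟨K', U, hK', hUo, hUu, hIU (Set.self_mem_Ici), hUK', hab⟩
    choose! K' U hK' hUo hUu hyU hUK' hab using step
    have hcov : K ⊆ ⋃ y : K, U y := fun y hy => Set.mem_iUnion.2 ⟨⟨y, hy⟩, hyU y hy⟩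
    obtain ⟨t, ht⟩ := @IsCompact.elim_finite_subcover Y (upTop Y) _ _ hK.1
      (fun y : K => U y) (fun y => ⟨hUo y y.2, hUu y y.2⟩) hcov
    have hL : CompSatUp (⋃ y ∈ t, K' y) :=
      compSatUp_biUnion t (fun y : K => K' y) fun y _ => hK' y y.2
    have hLab : (θ (⋃ y ∈ t, K' y)).r a b :=
      theta_biUnion θ hb hempty t (fun y : K => K' y) (fun y _ => hK' y y.2) a b
        (fun y _ => hab y y.2)
    have hKL : K ⊆ ⋃ y ∈ t, K' y := fun z hz => by
      obtain ⟨y, hyt, hzU⟩ := Set.mem_iUnion₂.1 (ht hz)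
      exact Set.mem_iUnion₂.2 ⟨y, hyt, hUK' y y.2 hzU⟩
    exact Setoid.le_def.1 (theta_mono θ hb hK hL hKL) hLab
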